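/- There exists C > 0 such that for every c : ℕ → ℂ and B ≥ 0 with (1+n)^{1/4} |c_n| ≤ B for all n ∈ ℕ, one has, for every z ∈ ℂ, Σ_{n=0}^{∞} |c_n φ_n(z)| ≤ C B; in particular the series Σ c_n φ_n(z) converges absolutely and |Σ_{n=0}^{∞} c_n φ_n(z)| ≤ C B for every z ∈ ℂ. -/

import Mathlib

open Real

lemma fact_lb (n : ℕ) : Real.sqrt (1 + n) * ((n : ℝ) / Real.exp 1) ^ n ≤ n.factorial := by
  rcases Nat.eq_zero_or_pos n with h | h
  · subst h; simp
  · obtain ⟨m, rfl⟩ := Nat.exists_eq_add_of_le h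
    have hs : Real.sqrt π ≤ Stirling.stirlingSeq (1 + m) := by
      have ht : Filter.Tendsto (Stirling.stirlingSeq ∘ Nat.succ) Filter.atTop (nhds (Real.sqrt π)) :=
        Stirling.tendsto_stirlingSeq_sqrt_pi.comp (Filter.tendsto_add_atTop_nat 1)
      have := Stirling.stirlingSeq'_antitone.le_of_tendsto ht m
      simpa [Nat.succ_eq_add_one, Nat.add_comm] using this
    have h1 : (1 : ℝ) ≤ Real.sqrt π := by
      rw [show (1:ℝ) = Real.sqrt 1 by simp]
      exact Real.sqrt_le_sqrt (by linarith [Real.pi_gt_three])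
    set n := 1 + m with hn
    have hpos : (0:ℝ) < Real.sqrt (2 * n) * ((n : ℝ) / Real.exp 1) ^ n := by
      have : (0:ℝ) < (n:ℝ) := by positivity
      positivity
    have h2 : (1:ℝ) ≤ Stirling.stirlingSeq n := le_trans h1 hs
    rw [Stirling.stirlingSeq, le_div_iff₀ hpos, one_mul] at h2
    refine le_trans ?_ h2
    have : Real.sqrt (1 + (n:ℝ)) ≤ Real.sqrt (2 * n) := by
      apply Real.sqrt_le_sqrt
      have : (1:ℝ) ≤ (n:ℝ) := by exact_mod_cast Nat.one_le_iff_ne_zero.2 (by omega)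
      linarith
    have hb : (0:ℝ) ≤ ((n : ℝ) / Real.exp 1) ^ n := by positivity
    calc Real.sqrt (1 + (n:ℕ)) * ((n : ℝ) / Real.exp 1) ^ n
        ≤ Real.sqrt (2 * n) * ((n : ℝ) / Real.exp 1) ^ n := by
          apply mul_le_mul_of_nonneg_right _ hb
          exact_mod_cast this
      _ = _ := rfl

lemma key (n : ℕ) (r : ℝ) (hr : 0 ≤ r) :
    Real.sqrt (1 + n) * r ^ (2 * n) * Real.exp ((n : ℝ) - 2 * Real.sqrt n * r)
      ≤ (n.factorial : ℝ) := by
  rcases Nat.eq_zero_or_pos n with h | h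
  · subst h
    simp [Real.sqrt_one]
  · have hn0 : (0 : ℝ) < n := by exact_mod_cast h
    have hsn : (0 : ℝ) < Real.sqrt n := Real.sqrt_pos.2 hn0
    set t := r / Real.sqrt n with hts
    have hrt : r = t * Real.sqrt n := by rw [hts, div_mul_cancel₀ _ hsn.ne']
    have ht0 : 0 ≤ t := div_nonneg hr hsn.le
    have hsq : Real.sqrt n ^ 2 = (n : ℝ) := Real.sq_sqrt hn0.le
    have h1 : r ^ (2 * n) = t ^ (2 * n) * (n : ℝ) ^ n := by
      rw [hrt, mul_pow]
      congr 1
      rw [pow_mul, hsq]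
    have h2 : t ^ (2 * n) ≤ Real.exp (t - 1) ^ (2 * n) :=
      pow_le_pow_left₀ ht0 (by linarith [Real.add_one_le_exp (t - 1)]) _
    have hsr : 2 * Real.sqrt n * r = 2 * n * t := by
      rw [hrt]; nlinarith [hsq]
    have h3 : r ^ (2 * n) * Real.exp ((n : ℝ) - 2 * Real.sqrt n * r)
        ≤ (n : ℝ) ^ n * Real.exp (-(n : ℝ)) := by
      rw [h1, hsr]
      calc t ^ (2 * n) * (n : ℝ) ^ n * Real.exp ((n : ℝ) - 2 * n * t)
          ≤ Real.exp (t - 1) ^ (2 * n) * (n : ℝ) ^ n * Real.exp ((n : ℝ) - 2 * n * t) := by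
            apply mul_le_mul_of_nonneg_right (mul_le_mul_of_nonneg_right h2 (by positivity))
              (Real.exp_nonneg _)
        _ = (n : ℝ) ^ n * Real.exp (-(n : ℝ)) := by
            rw [← Real.exp_nat_mul, mul_right_comm, ← Real.exp_add]
            push_cast
            ring_nf
    have h4 : (n : ℝ) ^ n * Real.exp (-(n : ℝ)) = ((n : ℝ) / Real.exp 1) ^ n := by
      rw [div_pow, ← Real.exp_nat_mul, mul_one, Real.exp_neg]
      ring
    calc Real.sqrt (1 + n) * r ^ (2 * n) * Real.exp ((n : ℝ) - 2 * Real.sqrt n * r)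
        = Real.sqrt (1 + n) * (r ^ (2 * n) * Real.exp ((n : ℝ) - 2 * Real.sqrt n * r)) := by ring
      _ ≤ Real.sqrt (1 + n) * ((n : ℝ) ^ n * Real.exp (-(n : ℝ))) :=
          mul_le_mul_of_nonneg_left h3 (Real.sqrt_nonneg _)
      _ = Real.sqrt (1 + n) * ((n : ℝ) / Real.exp 1) ^ n := by rw [h4]
      _ ≤ (n.factorial : ℝ) := fact_lb n

lemma key2 (n : ℕ) (r : ℝ) (hr : 0 ≤ r) :
    Real.sqrt (Real.sqrt (1 + n)) * r ^ n * Real.exp (((n : ℝ) - 2 * Real.sqrt n * r) / 2)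
      ≤ Real.sqrt n.factorial := by
  apply Real.le_sqrt_of_sq_le
  calc (Real.sqrt (Real.sqrt (1 + n)) * r ^ n * Real.exp (((n : ℝ) - 2 * Real.sqrt n * r) / 2)) ^ 2
      = Real.sqrt (Real.sqrt (1 + n)) ^ 2 * (r ^ n) ^ 2
          * Real.exp (((n : ℝ) - 2 * Real.sqrt n * r) / 2) ^ 2 := by ring
    _ = Real.sqrt (1 + n) * r ^ (2 * n) * Real.exp ((n : ℝ) - 2 * Real.sqrt n * r) := by
        rw [Real.sq_sqrt (Real.sqrt_nonneg _), ← pow_mul, mul_comm n 2,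
          ← Real.exp_nat_mul]
        have h22 : ((2 : ℕ) : ℝ) * (((n : ℝ) - 2 * Real.sqrt n * r) / 2)
            = (n : ℝ) - 2 * Real.sqrt n * r := by push_cast; ring
        rw [h22]
    _ ≤ (n.factorial : ℝ) := key n r hr

lemma Mbound (n : ℕ) (r : ℝ) (hr : 0 ≤ r) :
    r ^ n * Real.exp (-(r ^ 2) / 2) / (((1 : ℝ) + n) ^ ((1 : ℝ) / 4) * Real.sqrt (Real.pi * n.factorial))
      ≤ Real.exp (-(Real.sqrt n - r) ^ 2 / 2) / Real.sqrt (1 + n) := by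
  set q := Real.sqrt (Real.sqrt (1 + n)) with hqdef
  have hq : ((1 : ℝ) + n) ^ ((1 : ℝ) / 4) = q := by
    rw [hqdef, show (1 : ℝ) / 4 = (1 / 2 : ℝ) * (1 / 2 : ℝ) by norm_num,
      Real.rpow_mul (by positivity), ← Real.sqrt_eq_rpow, ← Real.sqrt_eq_rpow]
  have hq0 : 0 < q := by
    rw [hqdef]
    have : (0:ℝ) < 1 + n := by positivity
    positivity
  have hq2 : q ^ 2 = Real.sqrt (1 + n) := Real.sq_sqrt (Real.sqrt_nonneg _)
  have hfac : (0:ℝ) < Real.sqrt (Real.pi * n.factorial) := by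
    apply Real.sqrt_pos.2
    have := Real.pi_pos
    have : (0:ℝ) < n.factorial := by exact_mod_cast n.factorial_pos
    positivity
  have h1n : (0:ℝ) < Real.sqrt (1 + n) := Real.sqrt_pos.2 (by positivity)
  rw [hq, div_le_div_iff₀ (by positivity) h1n]
  have hexp : Real.exp (((n : ℝ) - 2 * Real.sqrt n * r) / 2)
      * Real.exp (-(Real.sqrt n - r) ^ 2 / 2) = Real.exp (-(r ^ 2) / 2) := by
    rw [← Real.exp_add]
    congr 1
    have hs : Real.sqrt n ^ 2 = (n : ℝ) := Real.sq_sqrt n.cast_nonneg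
    rw [sub_sq, hs]
    ring
  have hkey : q * r ^ n * Real.exp (((n : ℝ) - 2 * Real.sqrt n * r) / 2)
      ≤ Real.sqrt (Real.pi * n.factorial) := by
    refine (key2 n r hr).trans (Real.sqrt_le_sqrt ?_)
    nlinarith [Real.pi_gt_three, n.factorial_pos, (by exact_mod_cast n.factorial_pos : (0:ℝ) < n.factorial)]
  calc r ^ n * Real.exp (-(r ^ 2) / 2) * Real.sqrt (1 + n)
      = (q * r ^ n * Real.exp (((n : ℝ) - 2 * Real.sqrt n * r) / 2))
          * (Real.exp (-(Real.sqrt n - r) ^ 2 / 2) * q) := by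
        rw [← hq2, ← hexp]; ring
    _ ≤ Real.sqrt (Real.pi * n.factorial) * (Real.exp (-(Real.sqrt n - r) ^ 2 / 2) * q) := by
        apply mul_le_mul_of_nonneg_right hkey
        positivity
    _ = Real.exp (-(Real.sqrt n - r) ^ 2 / 2) * (q * Real.sqrt (Real.pi * n.factorial)) := by ring

lemma step (n : ℕ) (r : ℝ) :
    Real.exp (-(Real.sqrt n - r) ^ 2 / 2) / Real.sqrt (1 + n)
      ≤ 2 * Real.exp 2⁻¹ * ∫ s in (Real.sqrt n)..(Real.sqrt (n + 1 : ℕ)),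
          Real.exp (-(s - r) ^ 2 / 4) := by
  have hcast : ((n + 1 : ℕ) : ℝ) = (n : ℝ) + 1 := by push_cast; ring
  set a := Real.sqrt n with hadef
  set b := Real.sqrt (n + 1 : ℕ) with hbdef
  have ha2 : a ^ 2 = (n : ℝ) := Real.sq_sqrt n.cast_nonneg
  have hb2 : b ^ 2 = (n : ℝ) + 1 := by rw [hbdef, Real.sq_sqrt (n + 1 : ℕ).cast_nonneg, hcast]
  have ha0 : 0 ≤ a := Real.sqrt_nonneg _
  have hb0 : 0 < b := Real.sqrt_pos.2 (by rw [hcast]; positivity)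
  have hab : a ≤ b := Real.sqrt_le_sqrt (by rw [hcast]; linarith)
  have hba : b ≤ a + 1 := by
    have h1 : b ^ 2 ≤ (a + 1) ^ 2 := by nlinarith
    have h2 : 0 ≤ a + 1 := by linarith
    nlinarith
  have hb1n : b = Real.sqrt (1 + n) := by rw [hbdef, hcast, add_comm]
  have hgap : 1 / (2 * b) ≤ b - a := by
    rw [div_le_iff₀ (by positivity)]
    nlinarith [sq_nonneg (a - b)]
  set c := Real.exp (-(2⁻¹) - (a - r) ^ 2 / 2) with hcdef
  have hc0 : 0 < c := Real.exp_pos _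
  have hlow : ∀ s ∈ Set.Icc a b, c ≤ Real.exp (-(s - r) ^ 2 / 4) := by
    intro s hs
    rw [hcdef, Real.exp_le_exp]
    have h1 : 0 ≤ s - a := by linarith [hs.1]
    have h2 : s - a ≤ 1 := by linarith [hs.2]
    nlinarith [sq_nonneg (a - r - (s - a))]
  have hcont : Continuous fun s : ℝ => Real.exp (-(s - r) ^ 2 / 4) := by fun_prop
  have hintle : (b - a) * c ≤ ∫ s in a..b, Real.exp (-(s - r) ^ 2 / 4) := by
    have := intervalIntegral.integral_mono_on (μ := MeasureTheory.volume) hab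
      intervalIntegrable_const (hcont.intervalIntegrable a b)
      (fun s hs => hlow s hs)
    · simpa [intervalIntegral.integral_const, smul_eq_mul] using this
  calc Real.exp (-(a - r) ^ 2 / 2) / Real.sqrt (1 + n)
      = Real.exp 2⁻¹ * c * (1 / b) := by
        rw [hcdef, ← Real.exp_add, hb1n]; ring_nf
    _ ≤ Real.exp 2⁻¹ * c * (2 * (b - a)) := by
        apply mul_le_mul_of_nonneg_left _ (by positivity)
        rw [div_le_iff₀ (by positivity)] at hgap ⊢
        linarith
    _ = 2 * Real.exp 2⁻¹ * ((b - a) * c) := by ring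
    _ ≤ 2 * Real.exp 2⁻¹ * ∫ s in a..b, Real.exp (-(s - r) ^ 2 / 4) := by
        apply mul_le_mul_of_nonneg_left hintle (by positivity)

lemma gauss_int (r : ℝ) : MeasureTheory.Integrable (fun s : ℝ => Real.exp (-(s - r) ^ 2 / 4)) := by
  have h0 : MeasureTheory.Integrable (fun x : ℝ => Real.exp (-(4⁻¹ : ℝ) * x ^ 2)) :=
    integrable_exp_neg_mul_sq (by norm_num)
  have h1 := h0.comp_sub_right r
  have h2 : (fun x : ℝ => Real.exp (-(4⁻¹ : ℝ) * (x - r) ^ 2))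
      = fun s : ℝ => Real.exp (-(s - r) ^ 2 / 4) := by
    funext x
    congr 1
    ring
  rwa [h2] at h1

lemma gauss_val (r : ℝ) :
    (∫ s : ℝ, Real.exp (-(s - r) ^ 2 / 4)) = 2 * Real.sqrt Real.pi := by
  have h1 : (fun s : ℝ => Real.exp (-(s - r) ^ 2 / 4))
      = fun s : ℝ => (fun x : ℝ => Real.exp (-(4⁻¹ : ℝ) * x ^ 2)) (s - r) := by
    funext s
    simp only []
    congr 1
    ring
  rw [h1, MeasureTheory.integral_sub_right_eq_self (fun x : ℝ => Real.exp (-(4⁻¹ : ℝ) * x ^ 2)) r,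
    integral_gaussian]
  rw [show Real.pi / 4⁻¹ = 2 ^ 2 * Real.pi by ring,
    Real.sqrt_mul (by positivity), Real.sqrt_sq (by norm_num)]

lemma sumM_le (r : ℝ) (N : ℕ) :
    ∑ n ∈ Finset.range N, Real.exp (-(Real.sqrt n - r) ^ 2 / 2) / Real.sqrt (1 + n)
      ≤ 4 * Real.exp 2⁻¹ * Real.sqrt Real.pi := by
  have hcont : Continuous fun s : ℝ => Real.exp (-(s - r) ^ 2 / 4) := by fun_prop
  have hadj : ∑ n ∈ Finset.range N,
        (∫ s in (Real.sqrt n)..(Real.sqrt (n + 1 : ℕ)), Real.exp (-(s - r) ^ 2 / 4))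
      = ∫ s in (Real.sqrt (0 : ℕ))..(Real.sqrt (N : ℕ)), Real.exp (-(s - r) ^ 2 / 4) :=
    intervalIntegral.sum_integral_adjacent_intervals
      (a := fun k : ℕ => Real.sqrt k) (fun k _ => hcont.intervalIntegrable _ _)
  have hintle : (∫ s in (Real.sqrt (0 : ℕ))..(Real.sqrt (N : ℕ)), Real.exp (-(s - r) ^ 2 / 4))
      ≤ ∫ s : ℝ, Real.exp (-(s - r) ^ 2 / 4) := by
    rw [intervalIntegral.integral_of_le (by simp [Real.sqrt_nonneg])]
    exact MeasureTheory.setIntegral_le_integral (gauss_int r)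
      (Filter.Eventually.of_forall fun x => Real.exp_nonneg _)
  calc ∑ n ∈ Finset.range N, Real.exp (-(Real.sqrt n - r) ^ 2 / 2) / Real.sqrt (1 + n)
      ≤ ∑ n ∈ Finset.range N, 2 * Real.exp 2⁻¹
          * ∫ s in (Real.sqrt n)..(Real.sqrt (n + 1 : ℕ)), Real.exp (-(s - r) ^ 2 / 4) :=
        Finset.sum_le_sum fun n _ => step n r
    _ = 2 * Real.exp 2⁻¹ * ∑ n ∈ Finset.range N,
          ∫ s in (Real.sqrt n)..(Real.sqrt (n + 1 : ℕ)), Real.exp (-(s - r) ^ 2 / 4) := by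
        rw [Finset.mul_sum]
    _ ≤ 2 * Real.exp 2⁻¹ * (2 * Real.sqrt Real.pi) := by
        apply mul_le_mul_of_nonneg_left _ (by positivity)
        rw [hadj]
        exact hintle.trans_eq (gauss_val r)
    _ = 4 * Real.exp 2⁻¹ * Real.sqrt Real.pi := by ring


/-- The special Hermite function `φ_n(z) = z^n e^{-|z|²/2} / √(π n!)`. -/
noncomputable def hermiteFn (n : ℕ) (z : ℂ) : ℂ :=
  z ^ n * Complex.exp (-(‖z‖ : ℂ) ^ 2 / 2) / (Real.sqrt (Real.pi * n.factorial) : ℂ)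

/-- The `L^∞` norm of `Σ c_n φ_n` is controlled by the `ℓ^{∞,1/4}` norm of `(c_n)`:
there is `C > 0` such that if `(1+n)^{1/4} |c_n| ≤ B` for all `n`, then for every `z`
the series `Σ |c_n φ_n(z)|` converges with sum `≤ C B`; in particular
`|Σ c_n φ_n(z)| ≤ C B`. -/
theorem linfty_bound_by_coefficients :
    ∃ C : ℝ, 0 < C ∧ ∀ (c : ℕ → ℂ) (B : ℝ), 0 ≤ B →
      (∀ n : ℕ, ((1 : ℝ) + n) ^ ((1 : ℝ) / 4) * ‖c n‖ ≤ B) →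
      ∀ z : ℂ,
        Summable (fun n : ℕ => ‖c n * hermiteFn n z‖) ∧
        (∑' n : ℕ, ‖c n * hermiteFn n z‖) ≤ C * B ∧
        ‖∑' n : ℕ, c n * hermiteFn n z‖ ≤ C * B := by

  refine ⟨4 * Real.exp 2⁻¹ * Real.sqrt Real.pi, ?_, ?_⟩
  · have := Real.pi_pos
    positivity
  intro c B hB hc z
  set r := ‖z‖ with hrdef
  have hr : 0 ≤ r := norm_nonneg z
  have hnorm : ∀ n : ℕ, ‖hermiteFn n z‖
      = r ^ n * Real.exp (-(r ^ 2) / 2) / Real.sqrt (Real.pi * n.factorial) := by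
    intro n
    have h1 : ‖Complex.exp (-(r : ℂ) ^ 2 / 2)‖ = Real.exp (-(r ^ 2) / 2) := by
      rw [Complex.norm_exp]
      congr 1
      have h : (-(r : ℂ) ^ 2 / 2) = ((-(r ^ 2) / 2 : ℝ) : ℂ) := by push_cast; ring
      rw [h, Complex.ofReal_re]
    have h2 : ‖((Real.sqrt (Real.pi * n.factorial) : ℝ) : ℂ)‖
        = Real.sqrt (Real.pi * n.factorial) := by
      rw [Complex.norm_real, Real.norm_eq_abs, abs_of_nonneg (Real.sqrt_nonneg _)]
    rw [hermiteFn, norm_div, norm_mul, norm_pow, h1, h2, hrdef]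
  have hM : ∀ n : ℕ, ‖c n * hermiteFn n z‖
      ≤ B * (Real.exp (-(Real.sqrt n - r) ^ 2 / 2) / Real.sqrt (1 + n)) := by
    intro n
    rw [norm_mul, hnorm n]
    have hp : (0 : ℝ) < ((1 : ℝ) + n) ^ ((1 : ℝ) / 4) :=
      Real.rpow_pos_of_pos (by positivity) _
    have hc' : ‖c n‖ ≤ B / ((1 : ℝ) + n) ^ ((1 : ℝ) / 4) :=
      (le_div_iff₀ hp).2 (by rw [mul_comm]; exact hc n)
    have hfa : (0 : ℝ) < Real.sqrt (Real.pi * n.factorial) := by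
      apply Real.sqrt_pos.2
      have h1 := Real.pi_pos
      have h2 : (0 : ℝ) < n.factorial := by exact_mod_cast n.factorial_pos
      positivity
    calc ‖c n‖ * (r ^ n * Real.exp (-(r ^ 2) / 2) / Real.sqrt (Real.pi * n.factorial))
        ≤ (B / ((1 : ℝ) + n) ^ ((1 : ℝ) / 4))
            * (r ^ n * Real.exp (-(r ^ 2) / 2) / Real.sqrt (Real.pi * n.factorial)) := by
          apply mul_le_mul_of_nonneg_right hc' (by positivity)
      _ = B * (r ^ n * Real.exp (-(r ^ 2) / 2)
            / (((1 : ℝ) + n) ^ ((1 : ℝ) / 4) * Real.sqrt (Real.pi * n.factorial))) := by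
          rw [div_mul_div_comm, mul_div_assoc]
      _ ≤ B * (Real.exp (-(Real.sqrt n - r) ^ 2 / 2) / Real.sqrt (1 + n)) :=
          mul_le_mul_of_nonneg_left (Mbound n r hr) hB
  have hpartial : ∀ N : ℕ, ∑ n ∈ Finset.range N, ‖c n * hermiteFn n z‖
      ≤ 4 * Real.exp 2⁻¹ * Real.sqrt Real.pi * B := by
    intro N
    calc ∑ n ∈ Finset.range N, ‖c n * hermiteFn n z‖
        ≤ ∑ n ∈ Finset.range N,
            B * (Real.exp (-(Real.sqrt n - r) ^ 2 / 2) / Real.sqrt (1 + n)) :=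
          Finset.sum_le_sum fun n _ => hM n
      _ = B * ∑ n ∈ Finset.range N,
            Real.exp (-(Real.sqrt n - r) ^ 2 / 2) / Real.sqrt (1 + n) := by
          rw [Finset.mul_sum]
      _ ≤ B * (4 * Real.exp 2⁻¹ * Real.sqrt Real.pi) :=
          mul_le_mul_of_nonneg_left (sumM_le r N) hB
      _ = 4 * Real.exp 2⁻¹ * Real.sqrt Real.pi * B := by ring
  have hsum : Summable (fun n : ℕ => ‖c n * hermiteFn n z‖) :=
    summable_of_sum_range_le (fun n => norm_nonneg _) hpartial
  have htsum : (∑' n : ℕ, ‖c n * hermiteFn n z‖)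
      ≤ 4 * Real.exp 2⁻¹ * Real.sqrt Real.pi * B :=
    Summable.tsum_le_of_sum_range_le hsum hpartial
  exact ⟨hsum, htsum, le_trans (norm_tsum_le_tsum_norm hsum) htsum⟩
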